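/- For all i ≥ 1 and all partitions λ, u_{i+1}(u_{i+2}(u_{i+1}(u_i(λ)))) = u_{i+1}(u_{i+2}(u_i(u_{i+1}(λ)))). -/

import Mathlib

/-- A partition, represented by its column lengths (the conjugate):
`c i` is the number of boxes in column `i`. -/
def IsPartition (c : ℕ+ → ℕ) : Prop :=
  (∀ i : ℕ+, c (i + 1) ≤ c i) ∧ ∃ N : ℕ+, ∀ i : ℕ+, N ≤ i → c i = 0

open Classical in
/-- The Schur operator `u_i`: add a box to column `i` if the result is a
partition, else `none` (representing `0`). -/
noncomputable def addBox (i : ℕ+) (c : ℕ+ → ℕ) : Option (ℕ+ → ℕ) :=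
  if IsPartition (Function.update c i (c i + 1)) then
    some (Function.update c i (c i + 1))
  else none

/-- `u_x = u_{x_1} ∘ ⋯ ∘ u_{x_l}` for a word `x = x_1 ⋯ x_l`. -/
noncomputable def schurWord (x : List ℕ+) (c : ℕ+ → ℕ) : Option (ℕ+ → ℕ) :=
  x.foldr (fun i o => o.bind (addBox i)) (some c)

/-- `α_i(x)`: the maximum over suffixes `s` of `x` of `w_{i+1}(s) - w_i(s)`. -/
def alpha (i : ℕ+) (x : List ℕ+) : ℕ :=
  (x.tails.map (fun s => s.count (i + 1) - s.count i)).foldr max 0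
lemma pnat_succ_inj {a b : ℕ+} (h : a + 1 = b + 1) : a = b := by
  have := congrArg (fun x : ℕ+ => (x : ℕ)) h
  simpa using this

lemma isPartition_update_iff (i : ℕ+) (c : ℕ+ → ℕ) (hc : IsPartition c) :
    IsPartition (Function.update c i (c i + 1)) ↔ ∀ j : ℕ+, j + 1 = i → c i < c j := by
  constructor
  · intro hp j hj
    have h := hp.1 j
    have hji : j ≠ i := by
      intro h'; subst h'
      exact absurd hj (PNat.lt_add_right j 1).ne'
    rw [hj, Function.update_self, Function.update_of_ne hji] at h
    omega
  · intro h
    constructor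
    · intro k
      by_cases hk : k = i
      · subst hk
        have h1 : k + 1 ≠ k := (PNat.lt_add_right k 1).ne'
        rw [Function.update_of_ne h1, Function.update_self]
        exact le_trans (hc.1 k) (Nat.le_succ _)
      · by_cases hk1 : k + 1 = i
        · rw [hk1, Function.update_self, Function.update_of_ne hk]
          exact h k hk1
        · rw [Function.update_of_ne hk1, Function.update_of_ne hk]
          exact hc.1 k
    · obtain ⟨N, hN⟩ := hc.2
      refine ⟨N + i, fun j hj => ?_⟩
      have hji : j ≠ i := by
        intro h'; subst h'
        have := PNat.lt_add_left j N
        exact absurd hj (not_le.2 this)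
      rw [Function.update_of_ne hji]
      exact hN j (le_trans (le_of_lt (PNat.lt_add_right N i)) hj)

lemma addBox_pos (i : ℕ+) (c : ℕ+ → ℕ) (hc : IsPartition c)
    (h : ∀ j : ℕ+, j + 1 = i → c i < c j) :
    addBox i c = some (Function.update c i (c i + 1)) := by
  rw [addBox, if_pos ((isPartition_update_iff i c hc).2 h)]

lemma addBox_neg (i : ℕ+) (c : ℕ+ → ℕ) (hc : IsPartition c)
    (h : ¬ ∀ j : ℕ+, j + 1 = i → c i < c j) :
    addBox i c = none := by
  rw [addBox, if_neg (fun hp => h ((isPartition_update_iff i c hc).1 hp))]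

lemma isPartition_of_addBox_pos (i : ℕ+) (c : ℕ+ → ℕ) (hc : IsPartition c)
    (h : ∀ j : ℕ+, j + 1 = i → c i < c j) :
    IsPartition (Function.update c i (c i + 1)) :=
  (isPartition_update_iff i c hc).2 h
theorem stmt8 (i : ℕ+) (c : ℕ+ → ℕ) (hc : IsPartition c) :
    schurWord [i + 1, i + 2, i + 1, i] c = schurWord [i + 1, i + 2, i, i + 1] c := by
  have hadd : i + 1 + 1 = i + 2 := by rw [add_assoc]; congr 1
  have hne1 : i ≠ i + 1 := (PNat.lt_add_right i 1).ne
  have hne2 : i ≠ i + 2 := (PNat.lt_add_right i 2).ne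
  have hne3 : i + 1 ≠ i + 2 := by rw [← hadd]; exact (PNat.lt_add_right (i+1) 1).ne
  have cond1 : ∀ f : ℕ+ → ℕ, (∀ j : ℕ+, j + 1 = i + 1 → f (i+1) < f j) ↔ f (i+1) < f i :=
    fun f => ⟨fun h => h i rfl, fun h j hj => by rw [pnat_succ_inj hj]; exact h⟩
  have cond2 : ∀ f : ℕ+ → ℕ, (∀ j : ℕ+, j + 1 = i + 2 → f (i+2) < f j) ↔ f (i+2) < f (i+1) :=
    fun f => ⟨fun h => h (i+1) hadd, fun h j hj => by
      rw [pnat_succ_inj (hj.trans hadd.symm)]; exact h⟩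
  simp only [schurWord, List.foldr, Option.bind_some]
  by_cases hP1 : ∀ j : ℕ+, j + 1 = i → c i < c j
  · -- u_i applies
    by_cases hP2 : c (i+1) < c i
    · -- everything succeeds
      -- LHS
      set c1 := Function.update c i (c i + 1) with hc1def
      have hc1 : IsPartition c1 := isPartition_of_addBox_pos i c hc hP1
      have e1 : addBox i c = some c1 := addBox_pos i c hc hP1
      have v1i : c1 i = c i + 1 := Function.update_self _ _ _
      have v1i1 : c1 (i+1) = c (i+1) := Function.update_of_ne (Ne.symm hne1) _ _
      have v1i2 : c1 (i+2) = c (i+2) := Function.update_of_ne (Ne.symm hne2) _ _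
      have h2 : ∀ j : ℕ+, j + 1 = i + 1 → c1 (i+1) < c1 j := by
        rw [cond1, v1i1, v1i]; exact lt_of_le_of_lt (le_refl _) (by omega)
      set c2 := Function.update c1 (i+1) (c1 (i+1) + 1) with hc2def
      have hc2 : IsPartition c2 := isPartition_of_addBox_pos _ _ hc1 h2
      have e2 : addBox (i+1) c1 = some c2 := addBox_pos _ _ hc1 h2
      have v2i : c2 i = c i + 1 := by rw [hc2def, Function.update_of_ne hne1, v1i]
      have v2i1 : c2 (i+1) = c (i+1) + 1 := by rw [hc2def, Function.update_self, v1i1]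
      have v2i2 : c2 (i+2) = c (i+2) := by rw [hc2def, Function.update_of_ne (Ne.symm hne3), v1i2]
      have h3 : ∀ j : ℕ+, j + 1 = i + 2 → c2 (i+2) < c2 j := by
        rw [cond2, v2i2, v2i1]; have := hc.1 (i+1); rw [hadd] at this; omega
      set c3 := Function.update c2 (i+2) (c2 (i+2) + 1) with hc3def
      have hc3 : IsPartition c3 := isPartition_of_addBox_pos _ _ hc2 h3
      have e3 : addBox (i+2) c2 = some c3 := addBox_pos _ _ hc2 h3
      have v3i : c3 i = c i + 1 := by rw [hc3def, Function.update_of_ne hne2, v2i]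
      have v3i1 : c3 (i+1) = c (i+1) + 1 := by rw [hc3def, Function.update_of_ne hne3, v2i1]
      have h4 : ∀ j : ℕ+, j + 1 = i + 1 → c3 (i+1) < c3 j := by
        rw [cond1, v3i1, v3i]; omega
      have e4 : addBox (i+1) c3 = some (Function.update c3 (i+1) (c3 (i+1) + 1)) :=
        addBox_pos _ _ hc3 h4
      -- RHS
      have h2' : ∀ j : ℕ+, j + 1 = i + 1 → c (i+1) < c j := (cond1 c).2 hP2
      set d1 := Function.update c (i+1) (c (i+1) + 1) with hd1def
      have hd1 : IsPartition d1 := isPartition_of_addBox_pos _ _ hc h2'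
      have e1' : addBox (i+1) c = some d1 := addBox_pos _ _ hc h2'
      have w1i : d1 i = c i := Function.update_of_ne hne1 _ _
      have w1i1 : d1 (i+1) = c (i+1) + 1 := Function.update_self _ _ _
      have w1i2 : d1 (i+2) = c (i+2) := Function.update_of_ne (Ne.symm hne3) _ _
      have h2'' : ∀ j : ℕ+, j + 1 = i → d1 i < d1 j := by
        intro j hj
        have hji1 : j ≠ i + 1 := by
          intro h'; rw [h'] at hj
          exact hne2 (by rw [← hadd]; exact hj.symm)
        rw [w1i, hd1def, Function.update_of_ne hji1]
        exact hP1 j hj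
      set d2 := Function.update d1 i (d1 i + 1) with hd2def
      have hd2 : IsPartition d2 := isPartition_of_addBox_pos _ _ hd1 h2''
      have e2' : addBox i d1 = some d2 := addBox_pos _ _ hd1 h2''
      have w2i : d2 i = c i + 1 := by rw [hd2def, Function.update_self, w1i]
      have w2i1 : d2 (i+1) = c (i+1) + 1 := by rw [hd2def, Function.update_of_ne (Ne.symm hne1), w1i1]
      have w2i2 : d2 (i+2) = c (i+2) := by rw [hd2def, Function.update_of_ne (Ne.symm hne2), w1i2]
      have h3' : ∀ j : ℕ+, j + 1 = i + 2 → d2 (i+2) < d2 j := by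
        rw [cond2, w2i2, w2i1]; have := hc.1 (i+1); rw [hadd] at this; omega
      set d3 := Function.update d2 (i+2) (d2 (i+2) + 1) with hd3def
      have hd3 : IsPartition d3 := isPartition_of_addBox_pos _ _ hd2 h3'
      have e3' : addBox (i+2) d2 = some d3 := addBox_pos _ _ hd2 h3'
      have w3i : d3 i = c i + 1 := by rw [hd3def, Function.update_of_ne hne2, w2i]
      have w3i1 : d3 (i+1) = c (i+1) + 1 := by rw [hd3def, Function.update_of_ne hne3, w2i1]
      have h4' : ∀ j : ℕ+, j + 1 = i + 1 → d3 (i+1) < d3 j := by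
        rw [cond1, w3i1, w3i]; omega
      have e4' : addBox (i+1) d3 = some (Function.update d3 (i+1) (d3 (i+1) + 1)) :=
        addBox_pos _ _ hd3 h4'
      rw [e1, Option.bind_some, e2, Option.bind_some, e3, Option.bind_some, e4,
          e1', Option.bind_some, e2', Option.bind_some, e3', Option.bind_some, e4']
      congr 1
      funext j
      by_cases hj1 : j = i + 1
      · subst hj1
        rw [Function.update_self, Function.update_self, v3i1, w3i1]
      · rw [Function.update_of_ne hj1, Function.update_of_ne hj1]
        by_cases hj2 : j = i + 2
        · subst hj2
          rw [hc3def, Function.update_self, hd3def, Function.update_self, v2i2, w2i2]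
        · rw [hc3def, Function.update_of_ne hj2, hd3def, Function.update_of_ne hj2]
          by_cases hj3 : j = i
          · subst hj3; rw [v2i, w2i]
          · rw [hc2def, Function.update_of_ne hj1, hc1def, Function.update_of_ne hj3,
                hd2def, Function.update_of_ne hj3, hd1def, Function.update_of_ne hj1]
    · -- u_{i+1} fails in the end / at start : both none
      set c1 := Function.update c i (c i + 1) with hc1def
      have hc1 : IsPartition c1 := isPartition_of_addBox_pos i c hc hP1
      have e1 : addBox i c = some c1 := addBox_pos i c hc hP1
      have v1i : c1 i = c i + 1 := Function.update_self _ _ _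
      have v1i1 : c1 (i+1) = c (i+1) := Function.update_of_ne (Ne.symm hne1) _ _
      have v1i2 : c1 (i+2) = c (i+2) := Function.update_of_ne (Ne.symm hne2) _ _
      have h2 : ∀ j : ℕ+, j + 1 = i + 1 → c1 (i+1) < c1 j := by
        rw [cond1, v1i1, v1i]; have := hc.1 i; omega
      set c2 := Function.update c1 (i+1) (c1 (i+1) + 1) with hc2def
      have hc2 : IsPartition c2 := isPartition_of_addBox_pos _ _ hc1 h2
      have e2 : addBox (i+1) c1 = some c2 := addBox_pos _ _ hc1 h2
      have v2i : c2 i = c i + 1 := by rw [hc2def, Function.update_of_ne hne1, v1i]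
      have v2i1 : c2 (i+1) = c (i+1) + 1 := by rw [hc2def, Function.update_self, v1i1]
      have v2i2 : c2 (i+2) = c (i+2) := by rw [hc2def, Function.update_of_ne (Ne.symm hne3), v1i2]
      have h3 : ∀ j : ℕ+, j + 1 = i + 2 → c2 (i+2) < c2 j := by
        rw [cond2, v2i2, v2i1]; have := hc.1 (i+1); rw [hadd] at this; omega
      set c3 := Function.update c2 (i+2) (c2 (i+2) + 1) with hc3def
      have hc3 : IsPartition c3 := isPartition_of_addBox_pos _ _ hc2 h3
      have e3 : addBox (i+2) c2 = some c3 := addBox_pos _ _ hc2 h3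
      have v3i : c3 i = c i + 1 := by rw [hc3def, Function.update_of_ne hne2, v2i]
      have v3i1 : c3 (i+1) = c (i+1) + 1 := by rw [hc3def, Function.update_of_ne hne3, v2i1]
      have h4 : ¬ ∀ j : ℕ+, j + 1 = i + 1 → c3 (i+1) < c3 j := by
        rw [cond1, v3i1, v3i]; omega
      have e4 : addBox (i+1) c3 = none := addBox_neg _ _ hc3 h4
      have e1' : addBox (i+1) c = none := addBox_neg _ _ hc ((cond1 c).not.2 hP2)
      rw [e1, Option.bind_some, e2, Option.bind_some, e3, Option.bind_some, e4,
          e1', Option.bind_none, Option.bind_none, Option.bind_none]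
  · -- u_i fails
    have e1 : addBox i c = none := addBox_neg _ _ hc hP1
    rw [e1, Option.bind_none, Option.bind_none, Option.bind_none]
    by_cases hP2 : c (i+1) < c i
    · have h2' : ∀ j : ℕ+, j + 1 = i + 1 → c (i+1) < c j := (cond1 c).2 hP2
      set d1 := Function.update c (i+1) (c (i+1) + 1) with hd1def
      have hd1 : IsPartition d1 := isPartition_of_addBox_pos _ _ hc h2'
      have e1' : addBox (i+1) c = some d1 := addBox_pos _ _ hc h2'
      have h2'' : ¬ ∀ j : ℕ+, j + 1 = i → d1 i < d1 j := by
        intro h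
        apply hP1
        intro j hj
        have hji1 : j ≠ i + 1 := by
          intro h'; rw [h'] at hj
          exact hne2 (by rw [← hadd]; exact hj.symm)
        have := h j hj
        rw [hd1def] at this
        rwa [Function.update_of_ne hne1, Function.update_of_ne hji1] at this
      have e2' : addBox i d1 = none := addBox_neg _ _ hd1 h2''
      rw [e1', Option.bind_some, e2', Option.bind_none, Option.bind_none]
    · have e1' : addBox (i+1) c = none := addBox_neg _ _ hc ((cond1 c).not.2 hP2)
      rw [e1', Option.bind_none, Option.bind_none, Option.bind_none]
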